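/- arXiv:1111.1516 — 7 statements merged into one kernel-verified Lean document; each statement's English description precedes it below -/
import Mathlib

section
/- Let g : (0, δ) → ℝ be a bounded positive C¹ solution of r g'(r) − g(r)² ≥ 0 on a right neighborhood of 0. Then lim_{r→0⁺} g(r) = 0. -/
/-- Any bounded positive C¹ solution of r g' - g² ≥ 0 near 0⁺ tends to 0. -/
theorem limit_zero_of_diff_ineq (δ : ℝ) (hδ : 0 < δ) (g g' : ℝ → ℝ)
    (hderiv : ∀ r ∈ Set.Ioo 0 δ, HasDerivAt g (g' r) r)
    (hcont : ContinuousOn g' (Set.Ioo 0 δ))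
    (hpos : ∀ r ∈ Set.Ioo 0 δ, 0 < g r)
    (hbdd : ∃ M : ℝ, ∀ r ∈ Set.Ioo 0 δ, g r ≤ M)
    (hineq : ∀ r ∈ Set.Ioo 0 δ, r * g' r - g r ^ 2 ≥ 0) :
    Filter.Tendsto g (nhdsWithin 0 (Set.Ioi 0)) (nhds 0) := by
  set φ : ℝ → ℝ := fun r => -(g r)⁻¹ - Real.log r with hφ
  have hφderiv : ∀ r ∈ Set.Ioo 0 δ, HasDerivAt φ (g' r / g r ^ 2 - r⁻¹) r := by
    intro r hr
    have h1 : HasDerivAt (fun x => (g x)⁻¹) (-(g' r) / g r ^ 2) r :=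
      (hderiv r hr).inv (ne_of_gt (hpos r hr))
    have h2 := h1.neg.sub (Real.hasDerivAt_log (ne_of_gt hr.1))
    have h3 : g' r / g r ^ 2 - r⁻¹ = -(-(g' r) / g r ^ 2) - r⁻¹ := by ring
    rw [h3]
    exact h2
  have hmono : MonotoneOn φ (Set.Ioo 0 δ) := by
    have hint : interior (Set.Ioo 0 δ) = Set.Ioo 0 δ := isOpen_Ioo.interior_eq
    apply monotoneOn_of_deriv_nonneg (convex_Ioo 0 δ)
    · intro x hx
      exact (hφderiv x hx).continuousAt.continuousWithinAt
    · rw [hint]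
      intro x hx
      exact (hφderiv x hx).differentiableAt.differentiableWithinAt
    · rw [hint]
      intro x hx
      rw [(hφderiv x hx).deriv]
      have hxpos := hx.1
      have hgpos := hpos x hx
      have hg2 : (0:ℝ) < g x ^ 2 := by positivity
      have h := hineq x hx
      rw [sub_nonneg, le_div_iff₀ hg2]
      have h2 := mul_le_mul_of_nonneg_left (by linarith : g x ^ 2 ≤ x * g' x)
        (le_of_lt (inv_pos.mpr hxpos))
      calc x⁻¹ * g x ^ 2 ≤ x⁻¹ * (x * g' x) := h2
        _ = g' x := by field_simp
  set b : ℝ := δ / 2 with hb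
  have hbpos : 0 < b := by positivity
  have hbmem : b ∈ Set.Ioo 0 δ := ⟨hbpos, by simp [hb]; linarith⟩
  have hkey : ∀ a ∈ Set.Ioo 0 b, g a ≤ (Real.log b - Real.log a)⁻¹ := by
    intro a ha
    have haδ : a ∈ Set.Ioo 0 δ := ⟨ha.1, lt_trans ha.2 hbmem.2⟩
    have hmle := hmono haδ hbmem (le_of_lt ha.2)
    have hL : 0 < Real.log b - Real.log a :=
      sub_pos.mpr (Real.log_lt_log ha.1 ha.2)
    have hga := hpos a haδ
    have hgb := hpos b hbmem
    have h1 : Real.log b - Real.log a ≤ (g a)⁻¹ := by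
      have : (0:ℝ) < (g b)⁻¹ := by positivity
      simp only [hφ] at hmle
      linarith
    calc g a = ((g a)⁻¹)⁻¹ := (inv_inv _).symm
      _ ≤ (Real.log b - Real.log a)⁻¹ := by
          apply inv_anti₀ hL h1
  have hf : Filter.Tendsto (fun a => (Real.log b - Real.log a)⁻¹)
      (nhdsWithin 0 (Set.Ioi 0)) (nhds 0) := by
    apply Filter.Tendsto.comp tendsto_inv_atTop_zero
    have h1 : Filter.Tendsto (fun a => -Real.log a) (nhdsWithin 0 (Set.Ioi 0))
        Filter.atTop :=
      Filter.tendsto_neg_atBot_atTop.comp Real.tendsto_log_nhdsGT_zero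
    have := Filter.tendsto_atTop_add_const_left (nhdsWithin 0 (Set.Ioi 0)) (Real.log b) h1
    simpa [sub_eq_add_neg] using this
  apply squeeze_zero'
  · filter_upwards [Ioo_mem_nhdsGT_of_mem (Set.mem_Ico.mpr ⟨le_refl 0, hδ⟩)] with a ha
    exact le_of_lt (hpos a ha)
  · filter_upwards [Ioo_mem_nhdsGT_of_mem (Set.mem_Ico.mpr ⟨le_refl 0, hbpos⟩)] with a ha
    exact hkey a ha
  · exact hf
end

section
/- Let h : (s₀, ∞) → ℝ be C¹ and suppose that −h'(s) + h(s) − h(s)² converges to ℓ₁/4 as s → ∞ for some ℓ₁ ∈ [0, ∞]. Then ℓ₁ ≤ 1. -/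
/-- Quantitative decay: if f' ≤ -k on [a,b] then f b ≤ f a - k (b - a). -/
lemma decay_aux (f f' : ℝ → ℝ) (a b k : ℝ) (hab : a ≤ b)
    (hd : ∀ x ∈ Set.Icc a b, HasDerivAt f (f' x) x)
    (hk : ∀ x ∈ Set.Icc a b, f' x ≤ -k) :
    f b ≤ f a - k * (b - a) := by
  have hder : ∀ x ∈ Set.Icc a b, HasDerivAt (fun x => f x + k * x) (f' x + k) x := by
    intro x hx
    have := (hd x hx).add ((hasDerivAt_id x).const_mul k)
    rw [mul_one] at this
    exact this
  have H : AntitoneOn (fun x => f x + k * x) (Set.Icc a b) := by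
    apply antitoneOn_of_deriv_nonpos (convex_Icc a b)
    · exact fun x hx => (hder x hx).continuousAt.continuousWithinAt
    · exact fun x hx => ((hder x (interior_subset hx)).differentiableAt).differentiableWithinAt
    · intro x hx
      have hx' : x ∈ Set.Icc a b := interior_subset hx
      rw [(hder x hx').deriv]
      linarith [hk x hx']
  have := H (Set.left_mem_Icc.2 hab) (Set.right_mem_Icc.2 hab) hab
  simp only [] at this
  linarith

/-- If -h' + h - h² converges to ℓ₁/4 (with ℓ₁ ∈ [0,∞], i.e. ℓ₁ = 4·lim in EReal),
then ℓ₁ ≤ 1. -/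
theorem limit_le_one_step2 (s₀ : ℝ) (h h' : ℝ → ℝ)
    (hderiv : ∀ s ∈ Set.Ioi s₀, HasDerivAt h (h' s) s)
    (hcont : ContinuousOn h' (Set.Ioi s₀))
    (ℓ : EReal) (hℓ : 0 ≤ ℓ)
    (hlim : Filter.Tendsto (fun s => ((4 * (-h' s + h s - h s ^ 2) : ℝ) : EReal))
      Filter.atTop (nhds ℓ)) :
    ℓ ≤ 1 := by
  by_contra hlt
  push_neg at hlt
  obtain ⟨c, hc1, hcℓ⟩ := EReal.lt_iff_exists_real_btwn.mp hlt
  have hc1' : (1 : ℝ) < c := by exact_mod_cast hc1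
  have hev : ∀ᶠ s in Filter.atTop,
      (c : EReal) < ((4 * (-h' s + h s - h s ^ 2) : ℝ) : EReal) :=
    hlim.eventually_const_lt hcℓ
  obtain ⟨a₀, ha₀⟩ := Filter.eventually_atTop.mp hev
  set a : ℝ := max a₀ (s₀ + 1) with ha_def
  have has₀ : s₀ < a := lt_of_lt_of_le (by linarith) (le_max_right _ _)
  set δ : ℝ := (c - 1) / 4 with hδ_def
  have hδ : 0 < δ := by rw [hδ_def]; linarith
  -- key derivative bound
  have hkey : ∀ s, a ≤ s → h' s ≤ -(h s - 1/2)^2 - δ := by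
    intro s hs
    have h1 : (c : EReal) < ((4 * (-h' s + h s - h s ^ 2) : ℝ) : EReal) :=
      ha₀ s (le_trans (le_max_left _ _) hs)
    have h2 : c < 4 * (-h' s + h s - h s ^ 2) := by exact_mod_cast h1
    nlinarith [sq_nonneg (h s - 1/2)]
  have hmem : ∀ s, a ≤ s → s ∈ Set.Ioi s₀ := fun s hs => lt_of_lt_of_le has₀ hs
  set u : ℝ → ℝ := fun s => h s - 1/2 with hu_def
  have hu_deriv : ∀ s, a ≤ s → HasDerivAt u (h' s) s := by
    intro s hs
    exact (hderiv s (hmem s hs)).sub_const (1/2)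
  -- Step A: u decays at rate δ
  have hA : ∀ b, a ≤ b → u b ≤ u a - δ * (b - a) := by
    intro b hb
    apply decay_aux u (fun s => h' s) a b δ hb
    · exact fun x hx => hu_deriv x hx.1
    · intro x hx
      have := hkey x hx.1
      nlinarith [sq_nonneg (h x - 1/2)]
  -- pick a₁ with u a₁ ≤ -1
  set a₁ : ℝ := a + max 0 ((u a + 1) / δ) with ha₁_def
  have ha₁a : a ≤ a₁ := by simp [ha₁_def, le_max_left]
  have hua₁ : u a₁ ≤ -1 := by
    have := hA a₁ ha₁a
    rcases le_or_gt (u a + 1) 0 with hc0 | hc0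
    · have hm : 0 ≤ max 0 ((u a + 1) / δ) := le_max_left _ _
      nlinarith
    · have hm : max 0 ((u a + 1) / δ) = (u a + 1) / δ := by
        apply max_eq_right
        positivity
      rw [ha₁_def] at this
      rw [hm] at this
      have : u (a + (u a + 1) / δ) ≤ u a - δ * ((u a + 1) / δ) := by
        simpa using this
      have hδne : δ ≠ 0 := ne_of_gt hδ
      rw [ha₁_def, hm]
      calc u (a + (u a + 1) / δ) ≤ u a - δ * ((u a + 1) / δ) := this
        _ = -1 := by field_simp; ring
  -- Step B: u s ≤ -1 for all s ≥ a₁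
  have hB : ∀ s, a₁ ≤ s → u s ≤ -1 := by
    intro s hs
    have h1 : u s ≤ u a₁ - δ * (s - a₁) := by
      apply decay_aux u (fun s => h' s) a₁ s δ hs
      · exact fun x hx => hu_deriv x (le_trans ha₁a hx.1)
      · intro x hx
        have := hkey x (le_trans ha₁a hx.1)
        nlinarith [sq_nonneg (h x - 1/2)]
    nlinarith
  -- Step C: g = -1/u, g' ≤ -1 on [a₁, ∞)
  set g : ℝ → ℝ := fun s => -(u s)⁻¹ with hg_def
  have hg_deriv : ∀ s, a₁ ≤ s → HasDerivAt g (h' s / (u s)^2) s := by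
    intro s hs
    have hne : u s ≠ 0 := by have := hB s hs; intro e; rw [e] at this; linarith
    have := ((hu_deriv s (le_trans ha₁a hs)).inv hne).neg
    rw [neg_div, neg_neg] at this
    exact this
  have hg_bound : ∀ s, a₁ ≤ s → h' s / (u s)^2 ≤ -1 := by
    intro s hs
    have h1 := hkey s (le_trans ha₁a hs)
    have h2 := hB s hs
    have hsq : 1 ≤ (u s)^2 := by nlinarith
    rw [div_le_iff₀ (lt_of_lt_of_le one_pos hsq)]
    simp only [hu_def]
    linarith
  have hg_pos : ∀ s, a₁ ≤ s → 0 < g s := by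
    intro s hs
    have h1 := hB s hs
    have h2 : u s < 0 := by linarith
    have h3 : (u s)⁻¹ < 0 := inv_lt_zero.2 h2
    simp only [hg_def]
    linarith
  -- contradiction
  set b : ℝ := a₁ + g a₁ + 1 with hb_def
  have hba₁ : a₁ ≤ b := by have := hg_pos a₁ le_rfl; simp [hb_def]; linarith
  have hgb : g b ≤ g a₁ - 1 * (b - a₁) := by
    apply decay_aux g (fun s => h' s / (u s)^2) a₁ b 1 hba₁
    · exact fun x hx => hg_deriv x hx.1
    · intro x hx; simpa using hg_bound x hx.1
  have := hg_pos b hba₁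
  have hb' : b - a₁ = g a₁ + 1 := by rw [hb_def]; ring
  rw [hb'] at hgb
  linarith
end

section
/- Let H : (s₀, ∞) → ℝ be C¹ and suppose that H'(s) + H(s) − H(s)² converges to ℓ/4 as s → ∞ for some ℓ ∈ [0, ∞]. Then ℓ ≤ 1. -/
/-- If H' + H - H² converges to ℓ/4 (with ℓ ∈ [0,∞], i.e. ℓ = 4·lim in EReal),
then ℓ ≤ 1. -/
theorem limit_le_one_gaussian (s₀ : ℝ) (H H' : ℝ → ℝ)
    (hderiv : ∀ s ∈ Set.Ioi s₀, HasDerivAt H (H' s) s)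
    (hcont : ContinuousOn H' (Set.Ioi s₀))
    (ℓ : EReal) (hℓ : 0 ≤ ℓ)
    (hlim : Filter.Tendsto (fun s => ((4 * (H' s + H s - H s ^ 2) : ℝ) : EReal))
      Filter.atTop (nhds ℓ)) :
    ℓ ≤ 1 := by
  by_contra hcon
  push_neg at hcon
  -- pick a real r with 1 < r < ℓ
  obtain ⟨r, hr1, hrℓ⟩ := EReal.exists_between_coe_real hcon
  rw [show ((1 : EReal)) = ((1 : ℝ) : EReal) by norm_cast] at hr1
  have hr1' : (1 : ℝ) < r := by exact_mod_cast hr1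
  -- eventually r < 4 (H' + H - H²)
  have hQ : ∀ᶠ s in Filter.atTop, r < 4 * (H' s + H s - H s ^ 2) := by
    have := hlim.eventually_const_lt hrℓ
    filter_upwards [this] with s hs
    exact_mod_cast hs
  obtain ⟨a, ha⟩ := Filter.eventually_atTop.mp hQ
  set s₁ := max a (s₀ + 1) with hs₁def
  have hs₁gt : s₀ < s₁ := lt_of_lt_of_le (by linarith) (le_max_right _ _)
  have hmem : ∀ s, s₁ ≤ s → s ∈ Set.Ioi s₀ := fun s hs => lt_of_lt_of_le hs₁gt hs
  have haQ : ∀ s, s₁ ≤ s → r < 4 * (H' s + H s - H s ^ 2) := fun s hs =>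
    ha s (le_trans (le_max_left _ _) hs)
  set ε := (r - 1) / 4 with hεdef
  have hε : 0 < ε := by rw [hεdef]; linarith
  -- H' ≥ ε on [s₁, ∞)
  have hderivlow : ∀ s, s₁ ≤ s → ε ≤ H' s := by
    intro s hs
    have h1 := haQ s hs
    nlinarith [sq_nonneg (H s - 1/2)]
  -- mean value lower bound machinery on Ici t for t ≥ s₁
  have hint : ∀ t : ℝ, s₁ ≤ t → interior (Set.Ici t) = Set.Ioi t := fun t _ =>
    interior_Ici
  have hMV : ∀ t : ℝ, s₁ ≤ t → ∀ C : ℝ, (∀ x ∈ Set.Ioi t, C ≤ H' x) →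
      ∀ x ∈ Set.Ici t, ∀ y ∈ Set.Ici t, x ≤ y → C * (y - x) ≤ H y - H x := by
    intro t ht C hC
    have hconv : Convex ℝ (Set.Ici t) := convex_Ici t
    have hcontH : ContinuousOn H (Set.Ici t) := fun x hx =>
      ((hderiv x (hmem x (le_trans ht hx))).continuousAt).continuousWithinAt
    have hdiff : DifferentiableOn ℝ H (interior (Set.Ici t)) := by
      rw [interior_Ici]
      intro x hx
      exact ((hderiv x (hmem x (le_trans ht (le_of_lt hx)))).differentiableAt).differentiableWithinAt
    refine hconv.mul_sub_le_image_sub_of_le_deriv hcontH hdiff ?_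
    rw [interior_Ici]
    intro x hx
    rw [(hderiv x (hmem x (le_trans ht (le_of_lt hx)))).deriv]
    exact hC x hx
  have hgrow : ∀ x ∈ Set.Ici s₁, ∀ y ∈ Set.Ici s₁, x ≤ y → ε * (y - x) ≤ H y - H x :=
    hMV s₁ le_rfl ε (fun x hx => hderivlow x (le_of_lt hx))
  -- choose s₂ with H s₂ ≥ 2 and s₂ ≥ s₁
  set d := max 1 ((2 - H s₁) / ε + 1) with hddef
  have hd1 : (1 : ℝ) ≤ d := le_max_left _ _
  set s₂ := s₁ + d with hs₂def
  have hs₂ : s₁ ≤ s₂ := by linarith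
  have hHs₂ : 2 ≤ H s₂ := by
    have := hgrow s₁ Set.self_mem_Ici s₂ (by exact hs₂) hs₂
    have hd2 : (2 - H s₁) / ε + 1 ≤ d := le_max_right _ _
    have : ε * d ≤ H s₂ - H s₁ := by simpa [hs₂def] using this
    have h3 : ε * ((2 - H s₁) / ε + 1) ≤ ε * d := by nlinarith
    have h4 : ε * ((2 - H s₁) / ε + 1) = 2 - H s₁ + ε := by field_simp
    nlinarith
  -- H ≥ 2 on [s₂, ∞)
  have hH2 : ∀ s, s₂ ≤ s → 2 ≤ H s := by
    intro s hs
    have := hgrow s₂ (by exact hs₂) s (le_trans hs₂ hs) hs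
    nlinarith
  -- H' ≥ H²/2 on [s₂, ∞)
  have hH'sq : ∀ s, s₂ ≤ s → H s ^ 2 / 2 ≤ H' s := by
    intro s hs
    have h1 := haQ s (le_trans hs₂ hs)
    have h2 := hH2 s hs
    nlinarith
  -- consider φ = -(H)⁻¹ on Ici s₂, with derivative H'/H² ≥ 1/2
  have hφderiv : ∀ s, s₂ ≤ s → HasDerivAt (fun x => -(H x)⁻¹) (H' s / H s ^ 2) s := by
    intro s hs
    have hne : H s ≠ 0 := by have := hH2 s hs; linarith
    have := ((hderiv s (hmem s (le_trans hs₂ hs))).inv hne).neg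
    exact this.congr_deriv (by ring)
  have hconv : Convex ℝ (Set.Ici s₂) := convex_Ici s₂
  have hcontφ : ContinuousOn (fun x => -(H x)⁻¹) (Set.Ici s₂) := fun x hx =>
    ((hφderiv x hx).continuousAt).continuousWithinAt
  have hdiffφ : DifferentiableOn ℝ (fun x => -(H x)⁻¹) (interior (Set.Ici s₂)) := by
    rw [interior_Ici]
    intro x hx
    exact ((hφderiv x (le_of_lt hx)).differentiableAt).differentiableWithinAt
  have hφlow : ∀ x ∈ interior (Set.Ici s₂), (1:ℝ)/2 ≤ deriv (fun x => -(H x)⁻¹) x := by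
    rw [interior_Ici]
    intro x hx
    rw [(hφderiv x (le_of_lt hx)).deriv]
    have h2 := hH2 x (le_of_lt hx)
    have hsq : (0:ℝ) < H x ^ 2 := by positivity
    rw [le_div_iff₀ hsq]
    have := hH'sq x (le_of_lt hx)
    linarith
  have hfinal := hconv.mul_sub_le_image_sub_of_le_deriv hcontφ hdiffφ hφlow
    s₂ Set.self_mem_Ici (s₂ + 2) (Set.mem_Ici.mpr (by linarith)) (by linarith)
  -- hfinal : 1/2 * (s₂ + 2 - s₂) ≤ -(H (s₂+2))⁻¹ - (-(H s₂)⁻¹)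
  have h2a := hH2 s₂ le_rfl
  have h2b := hH2 (s₂ + 2) (by linarith)
  have hinv1 : (H s₂)⁻¹ ≤ 1/2 := by
    rw [inv_le_comm₀ (by linarith) (by norm_num)]
    simpa using h2a
  have hinv2 : (0:ℝ) < (H (s₂ + 2))⁻¹ := by positivity
  linarith
end

section
/- Define X₁(r) = (a − log r)⁻¹ for r ∈ (0, δ), a ≥ 1. Suppose g is C¹ on (0, δ) and define h_{k+1} implicitly by h_k(r) = t (h_{k+1}(t) + 1/2) with t = X₁(r), h₁ = g. Then (r h_k'(r) − h_k(r)²)/t² − 1/4 = t h_{k+1}'(t) − h_{k+1}(t)². -/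
/-- Recursion identity for the improved Hardy inequality: with t = X₁(r) = (a - log r)⁻¹
and h₂(t) := g(r)/t - 1/2 (i.e. g(r) = t (h₂(t) + 1/2)), one has
(r g'(r) - g(r)²)/t² - 1/4 = t h₂'(t) - h₂(t)². -/
theorem recursion_identity_hardy (a δ : ℝ) (ha : 1 ≤ a) (hδ0 : 0 < δ) (hδ1 : δ < 1)
    (g g' : ℝ → ℝ)
    (hderiv : ∀ r ∈ Set.Ioo 0 δ, HasDerivAt g (g' r) r) :
    ∀ r ∈ Set.Ioo (0 : ℝ) δ,
      (r * g' r - g r ^ 2) / ((a - Real.log r)⁻¹) ^ 2 - 1 / 4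
        = (a - Real.log r)⁻¹
            * deriv (fun t => g (Real.exp (a - 1 / t)) / t - 1 / 2) ((a - Real.log r)⁻¹)
          - (g r / (a - Real.log r)⁻¹ - 1 / 2) ^ 2 := by
  intro r hr
  obtain ⟨hr0, hrδ⟩ := hr
  have hlog : Real.log r < 0 := Real.log_neg hr0 (hrδ.trans hδ1)
  have hA : 0 < a - Real.log r := by linarith
  set t₀ : ℝ := (a - Real.log r)⁻¹ with ht₀
  have ht₀pos : 0 < t₀ := inv_pos.mpr hA
  have ht₀ne : t₀ ≠ 0 := ne_of_gt ht₀pos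
  have hinv : 1 / t₀ = a - Real.log r := by
    rw [ht₀, one_div, inv_inv]
  have hexp : Real.exp (a - 1 / t₀) = r := by
    rw [hinv]
    have : a - (a - Real.log r) = Real.log r := by ring
    rw [this, Real.exp_log hr0]
  -- inner function derivative
  have h1 : HasDerivAt (fun t : ℝ => a - 1 / t) (1 / t₀ ^ 2) t₀ := by
    have := ((hasDerivAt_inv ht₀ne).const_sub a)
    simpa [one_div, sub_eq_add_neg] using this
  have h2 : HasDerivAt (fun t : ℝ => Real.exp (a - 1 / t))
      (r * (1 / t₀ ^ 2)) t₀ := by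
    have H := (Real.hasDerivAt_exp (a - 1 / t₀)).comp t₀ h1
    simp only [Function.comp_def] at H
    rw [hexp] at H
    convert H using 1
  have hg : HasDerivAt g (g' r) (Real.exp (a - 1 / t₀)) := by
    rw [hexp]; exact hderiv r ⟨hr0, hrδ⟩
  have h3 : HasDerivAt (fun t : ℝ => g (Real.exp (a - 1 / t)))
      (g' r * (r * (1 / t₀ ^ 2))) t₀ := hg.comp t₀ h2
  have h4 : HasDerivAt (fun t : ℝ => g (Real.exp (a - 1 / t)) / t - 1 / 2)
      ((g' r * (r * (1 / t₀ ^ 2)) * t₀ - g (Real.exp (a - 1 / t₀)) * 1) / t₀ ^ 2) t₀ :=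
    (h3.div (hasDerivAt_id t₀) ht₀ne).sub_const (1 / 2)
  rw [h4.deriv, hexp]
  field_simp
  ring
end

section
/- For d ≥ 3, the functions h(r) = (d−2)(1+r²)/(r² + C(d−2) r^d), C > 0, solve the ODE (1+r²) r h' + ((d−2) r² + d) h − r² h² = 0 on (0,∞). -/
private lemma aux_frac (r X N D B : ℝ) (hD : D ≠ 0)
    (h : (1 + r ^ 2) * r * X + B * (N * D) - r ^ 2 * N ^ 2 = 0) :
    (1 + r ^ 2) * r * (X / D ^ 2) + B * (N / D) - r ^ 2 * (N / D) ^ 2 = 0 := by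
  have : (1 + r ^ 2) * r * (X / D ^ 2) + B * (N / D) - r ^ 2 * (N / D) ^ 2
      = ((1 + r ^ 2) * r * X + B * (N * D) - r ^ 2 * N ^ 2) / D ^ 2 := by
    field_simp
  rw [this, h, zero_div]

/-- Explicit solutions of the Hardy–Poincaré ODE. -/
theorem hardy_poincare_ode_solution (d : ℕ) (hd : 3 ≤ d) (C : ℝ) (hC : 0 < C) :
    ∀ r : ℝ, 0 < r →
      (1 + r ^ 2) * r
          * deriv (fun r => ((d : ℝ) - 2) * (1 + r ^ 2)
              / (r ^ 2 + C * ((d : ℝ) - 2) * r ^ (d : ℕ))) r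
        + (((d : ℝ) - 2) * r ^ 2 + (d : ℝ))
          * (((d : ℝ) - 2) * (1 + r ^ 2) / (r ^ 2 + C * ((d : ℝ) - 2) * r ^ (d : ℕ)))
        - r ^ 2 * (((d : ℝ) - 2) * (1 + r ^ 2)
            / (r ^ 2 + C * ((d : ℝ) - 2) * r ^ (d : ℕ))) ^ 2 = 0 := by
  intro r hr
  obtain ⟨n, rfl⟩ : ∃ n, d = n + 3 := ⟨d - 3, by omega⟩
  have hd2 : (0:ℝ) < ((n + 3 : ℕ) : ℝ) - 2 := by push_cast; linarith
  have hD : r ^ 2 + C * (((n + 3 : ℕ) : ℝ) - 2) * r ^ (n + 3) ≠ 0 := by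
    have : 0 < r ^ 2 + C * (((n + 3 : ℕ) : ℝ) - 2) * r ^ (n + 3) := by
      have := pow_pos hr (n + 3)
      have := pow_pos hr 2
      positivity
    linarith
  have hN : HasDerivAt (fun r : ℝ => (((n + 3 : ℕ) : ℝ) - 2) * (1 + r ^ 2))
      ((((n + 3 : ℕ) : ℝ) - 2) * (2 * r)) r := by
    have : HasDerivAt (fun r : ℝ => 1 + r ^ 2) (2 * r) r := by
      simpa using ((hasDerivAt_pow 2 r).const_add 1)
    exact this.const_mul _
  have hDd : HasDerivAt (fun r : ℝ => r ^ 2 + C * (((n + 3 : ℕ) : ℝ) - 2) * r ^ (n + 3))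
      (2 * r + C * (((n + 3 : ℕ) : ℝ) - 2) * ((n + 3) * r ^ (n + 2))) r := by
    have h1 : HasDerivAt (fun r : ℝ => r ^ 2) (2 * r) r := by
      simpa using hasDerivAt_pow 2 r
    have h2 : HasDerivAt (fun r : ℝ => C * (((n + 3 : ℕ) : ℝ) - 2) * r ^ (n + 3))
        (C * (((n + 3 : ℕ) : ℝ) - 2) * ((n + 3) * r ^ (n + 2))) r := by
      simpa using (hasDerivAt_pow (n + 3) r).const_mul (C * (((n + 3 : ℕ) : ℝ) - 2))
    exact h1.add h2
  have hq := (hN.div hDd hD).deriv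
  erw [hq]
  apply aux_frac _ _ _ _ _ hD
  push_cast
  ring
end

section
/- Let X(t) = log(1−t)/(log(1−t) − 1) and δ(t) = −t/log(1−t) for t ∈ (0,1). If h₀(t) = t/2 + δ(t) h₁(X(t)) with h₁ C¹ on (0,1), then [ −t(1−t) h₀'(t) + h₀(t) − h₀(t)² − t²/4 ] / δ(t)² = − s(1−s) h₁'(s) + h₁(s) − h₁(s)² with s = X(t). -/
open Real

/-- Key recursion identity for the improved gaussian Poincaré inequality (d ≥ 3):
with X(t) = log(1-t)/(log(1-t)-1), δ(t) = -t/log(1-t) and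
h₀(t) = t/2 + δ(t) h₁(X(t)). -/
theorem recursion_identity_gaussian
    (h₁ h₁' : ℝ → ℝ)
    (hderiv : ∀ s ∈ Set.Ioo (0 : ℝ) 1, HasDerivAt h₁ (h₁' s) s) :
    ∀ t ∈ Set.Ioo (0 : ℝ) 1,
      (-t * (1 - t)
            * deriv (fun t => t / 2
                + (-t / Real.log (1 - t))
                  * h₁ (Real.log (1 - t) / (Real.log (1 - t) - 1))) t
          + (t / 2 + (-t / Real.log (1 - t))
              * h₁ (Real.log (1 - t) / (Real.log (1 - t) - 1)))
          - (t / 2 + (-t / Real.log (1 - t))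
              * h₁ (Real.log (1 - t) / (Real.log (1 - t) - 1))) ^ 2
          - t ^ 2 / 4) / (-t / Real.log (1 - t)) ^ 2
        = -(Real.log (1 - t) / (Real.log (1 - t) - 1))
              * (1 - Real.log (1 - t) / (Real.log (1 - t) - 1))
              * h₁' (Real.log (1 - t) / (Real.log (1 - t) - 1))
          + h₁ (Real.log (1 - t) / (Real.log (1 - t) - 1))
          - h₁ (Real.log (1 - t) / (Real.log (1 - t) - 1)) ^ 2 := by
  intro t ht
  obtain ⟨ht0, ht1⟩ := ht
  have h1t : (0:ℝ) < 1 - t := by linarith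
  have hL : Real.log (1 - t) < 0 := Real.log_neg h1t (by linarith)
  set L := Real.log (1 - t) with hLdef
  have hLne : L ≠ 0 := ne_of_lt hL
  have hL1 : L - 1 < 0 := by linarith
  have hL1ne : L - 1 ≠ 0 := ne_of_lt hL1
  set s := L / (L - 1) with hsdef
  have hs : s ∈ Set.Ioo (0:ℝ) 1 := by
    constructor
    · exact div_pos_of_neg_of_neg hL hL1
    · rw [hsdef, div_lt_one_iff]
      exact Or.inr (Or.inr ⟨hL1, by linarith⟩)
  -- derivative of L(t) = log(1-t)
  have hLd : HasDerivAt (fun u : ℝ => Real.log (1 - u)) (-(1 - t)⁻¹) t := by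
    have h1 : HasDerivAt (fun u : ℝ => 1 - u) (-1) t := by
      exact (hasDerivAt_id' t).const_sub 1
    have := (Real.hasDerivAt_log (ne_of_gt h1t)).comp t h1
    exact this.congr_deriv (by ring)
  -- derivative of X(t) = L/(L-1)
  have hXd : HasDerivAt (fun u : ℝ => Real.log (1 - u) / (Real.log (1 - u) - 1))
      ((-(1 - t)⁻¹ * (L - 1) - L * (-(1 - t)⁻¹)) / (L - 1) ^ 2) t := by
    exact hLd.div (hLd.sub_const 1) hL1ne
  -- derivative of δ(t) = -t/L
  have hδd : HasDerivAt (fun u : ℝ => -u / Real.log (1 - u))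
      ((-1 * L - (-t) * (-(1 - t)⁻¹)) / L ^ 2) t := by
    exact ((hasDerivAt_id t).neg).div hLd hLne
  -- derivative of h₁ ∘ X
  have hcomp : HasDerivAt (fun u : ℝ => h₁ (Real.log (1 - u) / (Real.log (1 - u) - 1)))
      (h₁' s * ((-(1 - t)⁻¹ * (L - 1) - L * (-(1 - t)⁻¹)) / (L - 1) ^ 2)) t :=
    (hderiv s hs).comp t hXd
  have hfull : HasDerivAt (fun u : ℝ => u / 2
      + (-u / Real.log (1 - u)) * h₁ (Real.log (1 - u) / (Real.log (1 - u) - 1)))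
      (1 / 2 + (((-1 * L - (-t) * (-(1 - t)⁻¹)) / L ^ 2) * h₁ s
        + (-t / L) * (h₁' s * ((-(1 - t)⁻¹ * (L - 1) - L * (-(1 - t)⁻¹)) / (L - 1) ^ 2)))) t := by
    have := ((hasDerivAt_id t).div_const 2).add (hδd.mul hcomp)
    exact this
  rw [hfull.deriv]
  have htne : t ≠ 0 := ne_of_gt ht0
  have h1tne : (1 - t) ≠ 0 := ne_of_gt h1t
  show _ = -s * (1 - s) * h₁' s + h₁ s - h₁ s ^ 2
  set A := h₁ s with hA
  set B := h₁' s with hB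
  rw [hsdef]
  field_simp
  ring
end

section
/- Let h : (r₀, ∞) → ℝ be C¹, positive, and satisfy r h'(r) − h(r)² ≥ ℓ > 0 for all r large. Then no such h exists; equivalently, if f(r) := r h'(r) − h(r)² converges to ℓ ≥ 0 as r → ∞ for some positive C¹ function h, then ℓ = 0. -/
/-- For a positive C¹ function h on a half-line, if r h'(r) - h(r)² converges to
ℓ ≥ 0 as r → ∞, then ℓ = 0. -/
theorem zeroth_order_d2 (r₀ : ℝ) (h h' : ℝ → ℝ)
    (hderiv : ∀ r ∈ Set.Ioi r₀, HasDerivAt h (h' r) r)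
    (hcont : ContinuousOn h' (Set.Ioi r₀))
    (hpos : ∀ r ∈ Set.Ioi r₀, 0 < h r)
    (ℓ : ℝ) (hℓ : 0 ≤ ℓ)
    (hlim : Filter.Tendsto (fun r => r * h' r - h r ^ 2) Filter.atTop (nhds ℓ)) :
    ℓ = 0 := by
  by_contra hne
  have hlpos : 0 < ℓ := lt_of_le_of_ne hℓ (Ne.symm hne)
  set c : ℝ := ℓ / 2 with hc
  have hcpos : 0 < c := by positivity
  have hev : ∀ᶠ r in Filter.atTop, c ≤ r * h' r - h r ^ 2 :=
    hlim.eventually (eventually_ge_nhds (by linarith))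
  obtain ⟨R, hR⟩ := Filter.eventually_atTop.mp hev
  set R₁ : ℝ := max R (max r₀ 0) + 1 with hR₁
  have hR₁R : R ≤ R₁ := le_trans (le_max_left _ _) (by linarith)
  have hR₁r₀ : r₀ < R₁ := lt_of_le_of_lt (le_trans (le_max_left _ _) (le_max_right _ _)) (by linarith)
  have hR₁0 : 0 < R₁ := lt_of_le_of_lt (le_trans (le_max_right _ _) (le_max_right _ _)) (by linarith)
  set s : ℝ := Real.sqrt c with hs
  have hspos : 0 < s := Real.sqrt_pos.mpr hcpos
  have hs2 : s ^ 2 = c := Real.sq_sqrt hcpos.le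
  set F : ℝ → ℝ := fun r => Real.arctan (h r / s) / s - Real.log r with hF
  -- F has derivative at every point of Ici R₁
  have hFderiv : ∀ r ∈ Set.Ici R₁, HasDerivAt F
      (1 / (1 + (h r / s) ^ 2) * (h' r / s) / s - 1 / r) r := by
    intro r hr
    have hrr₀ : r ∈ Set.Ioi r₀ := lt_of_lt_of_le hR₁r₀ hr
    have hr0 : (0:ℝ) < r := lt_of_lt_of_le hR₁0 hr
    have h1 : HasDerivAt (fun r => h r / s) (h' r / s) r := (hderiv r hrr₀).div_const s
    have h2 : HasDerivAt (fun r => Real.arctan (h r / s))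
        (1 / (1 + (h r / s) ^ 2) * (h' r / s)) r :=
      by have := (Real.hasDerivAt_arctan (h r / s)).comp r h1; exact this
    have h3 : HasDerivAt Real.log (1 / r) r := by
      rw [one_div]; exact Real.hasDerivAt_log hr0.ne'
    exact (h2.div_const s).sub h3
  -- the derivative is nonnegative on Ioi R₁
  have hFnonneg : ∀ r ∈ Set.Ici R₁, 0 ≤ 1 / (1 + (h r / s) ^ 2) * (h' r / s) / s - 1 / r := by
    intro r hr
    have hr0 : (0:ℝ) < r := lt_of_lt_of_le hR₁0 hr
    have hbd : c ≤ r * h' r - h r ^ 2 := hR r (le_trans hR₁R hr)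
    have hden : 0 < s ^ 2 + h r ^ 2 := by positivity
    have heq : 1 / (1 + (h r / s) ^ 2) * (h' r / s) / s = h' r / (s ^ 2 + h r ^ 2) := by
      field_simp
    rw [heq, sub_nonneg, div_le_div_iff₀ hr0 hden, hs2]
    nlinarith
  -- F is monotone on Ici R₁
  have hmono : MonotoneOn F (Set.Ici R₁) := by
    apply monotoneOn_of_deriv_nonneg (convex_Ici R₁)
    · exact fun r hr => (hFderiv r hr).continuousAt.continuousWithinAt
    · intro r hr
      rw [interior_Ici] at hr
      exact (hFderiv r (Set.mem_Ici.mpr (le_of_lt (Set.mem_Ioi.mp hr)))).differentiableAt.differentiableWithinAt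
    · intro r hr
      rw [interior_Ici] at hr
      rw [(hFderiv r (Set.mem_Ici.mpr (le_of_lt (Set.mem_Ioi.mp hr)))).deriv]
      exact hFnonneg r (Set.mem_Ici.mpr (le_of_lt (Set.mem_Ioi.mp hr)))
  -- F r < π/2/s - log r always (for r > 0)
  have hFub : ∀ r, 0 < r → F r < Real.pi / 2 / s - Real.log r := by
    intro r hr
    have h1 : Real.arctan (h r / s) < Real.pi / 2 := Real.arctan_lt_pi_div_two (h r / s)
    have h2 : Real.arctan (h r / s) / s < Real.pi / 2 / s :=
      (div_lt_div_iff_of_pos_right hspos).mpr h1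
    simp only [hF]
    linarith
  -- contradiction at a large radius
  set r₂ : ℝ := max R₁ (Real.exp (Real.pi / 2 / s - F R₁)) with hr₂
  have hr₂R₁ : R₁ ≤ r₂ := le_max_left _ _
  have hr₂pos : 0 < r₂ := lt_of_lt_of_le hR₁0 hr₂R₁
  have hlog : Real.pi / 2 / s - F R₁ ≤ Real.log r₂ :=
    (Real.le_log_iff_exp_le hr₂pos).mpr (le_max_right _ _)
  have h3 : F R₁ ≤ F r₂ := hmono Set.self_mem_Ici hr₂R₁ hr₂R₁
  have h4 : F r₂ < Real.pi / 2 / s - Real.log r₂ := hFub r₂ hr₂pos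
  clear_value F s r₂
  linarith
end
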